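/- Let $V$ be an invertible $\ell \times \ell$ complex matrix. Then the smallest singular value of $V$ satisfies $\sigma_{\min}(V) \ge |\det V| / \|V\|_F^{\ell - 1}$, where $\|V\|_F$ is the Frobenius norm of $V$. -/

import Mathlib

open Matrix in

theorem stmt5 (ℓ : ℕ) (hℓ : 0 < ℓ) (V : Matrix (Fin ℓ) (Fin ℓ) ℂ) (hV : IsUnit V.det) :
    ∀ i, ‖V.det‖ / Real.sqrt (∑ i, ∑ j, ‖V i j‖ ^ 2) ^ (ℓ - 1) ≤
      Real.sqrt ((Matrix.isHermitian_conjTranspose_mul_self V).eigenvalues i) := by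
  intro i
  have hHerm := Matrix.isHermitian_conjTranspose_mul_self V
  set lam := hHerm.eigenvalues with hlam
  have hnonneg : ∀ j, 0 ≤ lam j := fun j =>
    Matrix.eigenvalues_conjTranspose_mul_self_nonneg V j
  set F : ℝ := ∑ i, ∑ j, ‖V i j‖ ^ 2 with hF
  -- trace identity : ∑ lam = F
  have htrC : (Vᴴ * V).trace = (F : ℂ) := by
    simp only [Matrix.trace, Matrix.diag, Matrix.mul_apply, Matrix.conjTranspose_apply, hF]
    push_cast
    rw [Finset.sum_comm]
    refine Finset.sum_congr rfl fun j _ => Finset.sum_congr rfl fun k _ => ?_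
    rw [Complex.star_def, ← Complex.normSq_eq_conj_mul_self, ← Complex.sq_norm]
    push_cast
    ring
  have htrC2 : (Vᴴ * V).trace = ((∑ j, lam j : ℝ) : ℂ) := by
    conv_lhs => rw [hHerm.spectral_theorem]
    rw [Unitary.conjStarAlgAut_apply, Matrix.trace_mul_cycle, Unitary.coe_star_mul_self, Matrix.one_mul,
      Matrix.trace_diagonal]
    push_cast
    simp [Function.comp, hlam]
  have htr : ∑ j, lam j = F := by
    have := htrC2.symm.trans htrC
    exact_mod_cast this
  -- determinant identity : ∏ lam = |det V|^2
  have hdetC : ((Vᴴ * V).det : ℂ) = ((‖V.det‖ ^ 2 : ℝ) : ℂ) := by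
    rw [Matrix.det_mul, Matrix.det_conjTranspose, Complex.star_def,
      ← Complex.normSq_eq_conj_mul_self, ← Complex.sq_norm]
  have hdet : ∏ j, lam j = ‖V.det‖ ^ 2 := by
    have h := hHerm.det_eq_prod_eigenvalues
    rw [hdetC] at h
    rw [hlam]
    have h2 : ((∏ j, hHerm.eigenvalues j : ℝ) : ℂ) = ((‖V.det‖ ^ 2 : ℝ) : ℂ) := by
      push_cast
      push_cast at h
      exact h.symm
    exact_mod_cast h2
  have hdetpos : 0 < ‖V.det‖ := by
    rw [norm_pos_iff]
    exact IsUnit.ne_zero (by simpa using hV)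
  -- each eigenvalue is at most F
  have hle : ∀ j, lam j ≤ F := by
    intro j
    rw [← htr]
    exact Finset.single_le_sum (fun k _ => hnonneg k) (Finset.mem_univ j)
  have hFnonneg : 0 ≤ F := le_trans (hnonneg i) (hle i)
  -- key inequality
  have hkey : ‖V.det‖ ^ 2 ≤ lam i * F ^ (ℓ - 1) := by
    rw [← hdet, ← Finset.mul_prod_erase Finset.univ lam (Finset.mem_univ i)]
    refine mul_le_mul_of_nonneg_left ?_ (hnonneg i)
    calc ∏ j ∈ Finset.univ.erase i, lam j
        ≤ ∏ _j ∈ Finset.univ.erase i, F :=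
          Finset.prod_le_prod (fun j _ => hnonneg j) (fun j _ => hle j)
      _ = F ^ (ℓ - 1) := by
          rw [Finset.prod_const, Finset.card_erase_of_mem (Finset.mem_univ i),
            Finset.card_univ, Fintype.card_fin]
  have hprodpos : 0 < lam i * F ^ (ℓ - 1) := lt_of_lt_of_le (pow_pos hdetpos 2) hkey
  have hFpowpos : 0 < F ^ (ℓ - 1) := by
    rcases (mul_pos_iff.mp hprodpos) with ⟨_, h⟩ | ⟨_, h⟩
    · exact h
    · exact absurd h (not_lt.mpr (pow_nonneg hFnonneg _))
  have hsqrtpos : 0 < Real.sqrt F ^ (ℓ - 1) := by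
    rcases Nat.eq_zero_or_pos (ℓ - 1) with h | h
    · simp [h]
    · have hF0 : 0 < F := by
        rcases hFnonneg.lt_or_eq with h' | h'
        · exact h'
        · exfalso
          rw [← h', zero_pow h.ne'] at hFpowpos
          exact lt_irrefl 0 hFpowpos
      exact pow_pos (Real.sqrt_pos.mpr hF0) _
  rw [div_le_iff₀ hsqrtpos]
  calc ‖V.det‖
      ≤ Real.sqrt (lam i * F ^ (ℓ - 1)) := by
        rw [← Real.sqrt_sq (norm_nonneg V.det)]
        exact Real.sqrt_le_sqrt hkey
    _ = Real.sqrt (lam i) * Real.sqrt F ^ (ℓ - 1) := by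
        rw [Real.sqrt_mul (hnonneg i)]
        congr 1
        symm
        rw [← Real.sqrt_sq (pow_nonneg (Real.sqrt_nonneg F) (ℓ - 1))]
        congr 1
        rw [← pow_mul, mul_comm, pow_mul, Real.sq_sqrt hFnonneg]
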